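/- Let (uₙ) be bounded in H¹(ℝ³) with ‖uₙ‖_{L³(ℝ³)} ≥ c₁ > 0. Define Ω_j = {x : j ≤ x₃ < j+1} for j ∈ ℤ. Then for each large n there exists an integer jₙ such that ‖uₙ‖_{L³(Ω_{jₙ})} ≥ c₄ for a constant c₄ > 0 depending only on c₁, the Sobolev constant of H¹(Ω_j) ↪ L³(Ω_j) (uniform in j), and sup‖uₙ‖_{H¹}. -/

import Mathlib

open MeasureTheory Real Filter Topology

noncomputable section

abbrev V3 := Fin 3 → ℝ

def pd (i : Fin 3) (f : V3 → ℝ) (x : V3) : ℝ := fderiv ℝ f x (Pi.single i 1)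

/-- Concentration in slabs: if `(uₙ)` is bounded in `H¹(ℝ³)` and
`∫|uₙ|³ ≥ c₁ > 0`, then there is `c₄ > 0` such that for each `n` some slab
`Ω_j = {j ≤ x₃ < j+1}` carries `∫_{Ω_j}|uₙ|³ ≥ c₄`. -/
-- 1D lemma
lemma one_dim (g G : ℝ → ℝ) (hg : ∀ t, HasDerivAt g (G t) t) (a s : ℝ)
    (hs : s ∈ Set.Icc a (a+1))
    (hgi : IntegrableOn g (Set.Icc a (a+1)))
    (hGi : IntegrableOn G (Set.Icc a (a+1))) :
    g s ≤ (∫ t in Set.Icc a (a+1), g t) + ∫ t in Set.Icc a (a+1), |G t| := by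
  set I := Set.Icc a (a+1) with hI
  have hvol : volume I = 1 := by rw [hI, Real.volume_Icc]; norm_num
  have hprob : IsProbabilityMeasure (volume.restrict I) := ⟨by simp [hvol]⟩
  have hnull : (volume.restrict I) Iᶜ = 0 := by
    rw [Measure.restrict_apply (measurableSet_Icc.compl)]
    rw [Set.compl_inter_self, measure_empty]
  obtain ⟨t₀, ht₀mem, ht₀⟩ := exists_notMem_null_le_integral hgi hnull
  rw [Set.notMem_compl_iff] at ht₀mem
  have hii : IntervalIntegrable G volume t₀ s :=
    (hGi.mono_set (Set.uIcc_subset_Icc ht₀mem hs)).intervalIntegrable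
  have hftc : ∫ t in t₀..s, G t = g s - g t₀ :=
    intervalIntegral.integral_eq_sub_of_hasDerivAt (fun t _ => hg t) hii
  have habs : |∫ t in t₀..s, G t| ≤ ∫ t in Set.uIoc t₀ s, |G t| := by
    simpa [Real.norm_eq_abs] using
      intervalIntegral.norm_integral_le_integral_norm_uIoc (a := t₀) (b := s) (f := G) (μ := volume)
  have hsub : ∫ t in Set.uIoc t₀ s, |G t| ≤ ∫ t in I, |G t| := by
    apply setIntegral_mono_set hGi.abs
    · exact Filter.Eventually.of_forall fun t => abs_nonneg _
    · exact HasSubset.Subset.eventuallyLE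
        (le_trans Set.uIoc_subset_uIcc (Set.uIcc_subset_Icc ht₀mem hs))
  have : g s - g t₀ ≤ ∫ t in I, |G t| := by
    rw [← hftc]
    exact le_trans (le_abs_self _) (le_trans habs hsub)
  linarith

lemma pd_meas (w : V3 → ℝ) (i : Fin 3) : Measurable (pd i w) :=
  measurable_fderiv_apply_const ℝ w (Pi.single i 1)

lemma hline_meas (w : V3 → ℝ) (hw : Differentiable ℝ w) :
    Measurable fun y : V3 => 4 * ((∑ k, pd k w y ^ 2) + w y ^ 2) := by
  apply Measurable.const_mul
  exact ((Finset.measurable_sum _ fun k _ => (pd_meas w k).pow_const 2).add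
    ((hw.continuous.measurable).pow_const 2))

lemma key (w : V3 → ℝ) (hw : Differentiable ℝ w) (x : V3) (i : Fin 3) (a : ℝ)
    (hx : x i ∈ Set.Icc a (a+1)) :
    ENNReal.ofReal (w x ^ 2) ≤
      ∫⁻ t in Set.Icc a (a+1),
        ENNReal.ofReal (4 * ((∑ k, pd k w (Function.update x i t) ^ 2)
          + w (Function.update x i t) ^ 2)) := by
  set I := Set.Icc a (a+1) with hIdef
  set hline : ℝ → ℝ := fun t =>
    4 * ((∑ k, pd k w (Function.update x i t) ^ 2) + w (Function.update x i t) ^ 2) with hhline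
  rcases eq_or_ne (∫⁻ t in I, ENNReal.ofReal (hline t)) ⊤ with htop | hfin
  · rw [htop]; exact le_top
  -- measurability
  have hmes : Measurable hline := (hline_meas w hw).comp (measurable_update x)
  have hnn : ∀ t, 0 ≤ hline t := fun t => by positivity
  have hint : IntegrableOn hline I := by
    refine ⟨hmes.aestronglyMeasurable.restrict, ?_⟩
    rw [hasFiniteIntegral_iff_ofReal (Filter.Eventually.of_forall hnn)]
    exact lt_top_iff_ne_top.2 hfin
  -- the path derivative
  have hpath : ∀ t : ℝ, HasDerivAt (fun s => Function.update x i s) (Pi.single i 1) t := by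
    intro t
    rw [hasDerivAt_pi]
    intro k
    by_cases hk : k = i
    · subst hk
      simp only [Function.update_self, Pi.single_eq_same]
      exact hasDerivAt_id t
    · simp only [Function.update_of_ne hk, Pi.single_eq_of_ne hk]
      exact hasDerivAt_const t (x k)
  have hcomp : ∀ t : ℝ, HasDerivAt (fun s => w (Function.update x i s))
      (pd i w (Function.update x i t)) t := fun t =>
    ((hw (Function.update x i t)).hasFDerivAt.comp_hasDerivAt t (hpath t))
  set g : ℝ → ℝ := fun t => w (Function.update x i t) ^ 2 with hgdef
  set G : ℝ → ℝ := fun t => 2 * w (Function.update x i t) * pd i w (Function.update x i t) with hGdef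
  have hg : ∀ t, HasDerivAt g (G t) t := by
    intro t
    have := (hcomp t).fun_pow 2
    simpa [hGdef] using this
  have hsum : ∀ t, pd i w (Function.update x i t) ^ 2 ≤
      ∑ k, pd k w (Function.update x i t) ^ 2 := fun t =>
    Finset.single_le_sum (f := fun k => pd k w (Function.update x i t) ^ 2)
      (fun k _ => sq_nonneg _) (Finset.mem_univ i)
  have hgb : ∀ t, |g t| ≤ hline t / 2 := by
    intro t
    have h1 := hsum t
    have h2 : Finset.univ.sum (fun k => pd k w (Function.update x i t) ^ 2) ≥ 0 :=
      Finset.sum_nonneg fun k _ => sq_nonneg _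
    rw [abs_of_nonneg (sq_nonneg _)]
    simp only [hgdef, hhline]
    nlinarith [sq_nonneg (w (Function.update x i t))]
  have hGb : ∀ t, |G t| ≤ hline t / 2 := by
    intro t
    have h1 := hsum t
    have h2 : Finset.univ.sum (fun k => pd k w (Function.update x i t) ^ 2) ≥ 0 :=
      Finset.sum_nonneg fun k _ => sq_nonneg _
    rw [abs_le]
    constructor <;>
    · simp only [hGdef, hhline]
      nlinarith [sq_nonneg (w (Function.update x i t) + pd i w (Function.update x i t)),
        sq_nonneg (w (Function.update x i t) - pd i w (Function.update x i t))]
  have hgmes : Measurable g := ((hw.continuous.measurable).comp (measurable_update x)).pow_const 2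
  have hGmes : Measurable G := by
    apply Measurable.mul
    · exact (measurable_const.mul ((hw.continuous.measurable).comp (measurable_update x)))
    · exact (pd_meas w i).comp (measurable_update x)
  have hgi : IntegrableOn g I :=
    Integrable.mono hint hgmes.aestronglyMeasurable.restrict
      (Filter.Eventually.of_forall fun t =>
        (hgb t).trans (by rw [Real.norm_eq_abs, abs_of_nonneg (hnn t)]; linarith [hnn t]))
  have hGi : IntegrableOn G I :=
    Integrable.mono hint hGmes.aestronglyMeasurable.restrict
      (Filter.Eventually.of_forall fun t =>
        (hGb t).trans (by rw [Real.norm_eq_abs, abs_of_nonneg (hnn t)]; linarith [hnn t]))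
  have hkey := one_dim g G hg a (x i) hx hgi hGi
  have hgx : g (x i) = w x ^ 2 := by rw [hgdef]; simp [Function.update_eq_self]
  have hsum2 : (∫ t in I, g t) + ∫ t in I, |G t| ≤ ∫ t in I, hline t := by
    rw [← integral_add hgi hGi.abs]
    apply setIntegral_mono_on (hgi.add hGi.abs) hint measurableSet_Icc
    intro t _
    simp only [Pi.add_apply]
    have := hgb t
    have := hGb t
    have := le_abs_self (g t)
    linarith [hgb t, hGb t, le_abs_self (g t), (hGb t)]
  have hfin2 : w x ^ 2 ≤ ∫ t in I, hline t := by
    rw [← hgx]; linarith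
  calc ENNReal.ofReal (w x ^ 2) ≤ ENNReal.ofReal (∫ t in I, hline t) :=
        ENNReal.ofReal_le_ofReal hfin2
    _ = ∫⁻ t in I, ENNReal.ofReal (hline t) :=
        ofReal_integral_eq_lintegral_ofReal hint (Filter.Eventually.of_forall hnn)
def slab (j : ℤ) : Set V3 := {x : V3 | (j : ℝ) ≤ x 2 ∧ x 2 < (j : ℝ) + 1}

lemma slab_meas (j : ℤ) : MeasurableSet (slab j) := by
  have : slab j = (fun x : V3 => x 2) ⁻¹' Set.Ico (j : ℝ) ((j : ℝ) + 1) := rfl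
  rw [this]
  exact (measurable_pi_apply 2) measurableSet_Ico

lemma slab_sobolev (w : V3 → ℝ) (hw : Differentiable ℝ w) (j : ℤ) :
    ∫⁻ x in slab j, ENNReal.ofReal (|w x| ^ 3) ≤
      (∫⁻ x in slab j, ENNReal.ofReal (4 * ((∑ k, pd k w x ^ 2) + w x ^ 2))) ^ ((3:ℝ)/2) := by
  set F : V3 → ENNReal := fun y => ENNReal.ofReal (4 * ((∑ k, pd k w y ^ 2) + w y ^ 2)) with hFdef
  set f : V3 → ENNReal := (slab j).indicator F with hfdef
  have hFmes : Measurable F := (hline_meas w hw).ennreal_ofReal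
  have hfmes : Measurable f := hFmes.indicator (slab_meas j)
  have hconj : ((Fintype.card (Fin 3) : ℝ)).HolderConjugate ((3:ℝ)/2) := by
    rw [Fintype.card_fin]
    constructor <;> norm_num
  have LW := MeasureTheory.lintegral_prod_lintegral_pow_le
    (fun _ : Fin 3 => (volume : Measure ℝ)) hconj hfmes
  rw [← MeasureTheory.volume_pi] at LW
  simp only [Fintype.card_fin, Nat.cast_ofNat] at LW
  norm_num at LW
  -- pointwise bound
  have hpt : ∀ x : V3, (slab j).indicator (fun y => ENNReal.ofReal (|w y| ^ 3)) x ≤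
      ∏ i : Fin 3, (∫⁻ t, f (Function.update x i t)) ^ ((1:ℝ)/2) := by
    intro x
    by_cases hx : x ∈ slab j
    · rw [Set.indicator_of_mem hx]
      have hb : ∀ i : Fin 3, ENNReal.ofReal (w x ^ 2) ≤ ∫⁻ t, f (Function.update x i t) := by
        intro i
        by_cases hi : i = 2
        · subst hi
          have heq : ∀ t : ℝ, f (Function.update x 2 t) =
              (Set.Ico (j:ℝ) ((j:ℝ)+1)).indicator (fun t => F (Function.update x 2 t)) t := by
            intro t
            by_cases ht : t ∈ Set.Ico (j:ℝ) ((j:ℝ)+1)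
            · rw [Set.indicator_of_mem ht, hfdef, Set.indicator_of_mem]
              exact ⟨by simpa using ht.1, by simpa using ht.2⟩
            · rw [Set.indicator_of_notMem ht, hfdef, Set.indicator_of_notMem]
              intro hmem
              exact ht ⟨by simpa using hmem.1, by simpa using hmem.2⟩
          calc ENNReal.ofReal (w x ^ 2)
              ≤ ∫⁻ t in Set.Icc (j:ℝ) ((j:ℝ)+1), F (Function.update x 2 t) :=
                key w hw x 2 (j:ℝ) ⟨hx.1, le_of_lt hx.2⟩
            _ = ∫⁻ t in Set.Ico (j:ℝ) ((j:ℝ)+1), F (Function.update x 2 t) := by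
                rw [Measure.restrict_congr_set MeasureTheory.Ico_ae_eq_Icc]
            _ = ∫⁻ t, (Set.Ico (j:ℝ) ((j:ℝ)+1)).indicator
                  (fun t => F (Function.update x 2 t)) t := by
                rw [lintegral_indicator measurableSet_Ico]
            _ = ∫⁻ t, f (Function.update x 2 t) := by
                apply lintegral_congr
                intro t
                rw [heq t]
        · have h2ne : (2 : Fin 3) ≠ i := Ne.symm hi
          have hmem : ∀ t : ℝ, Function.update x i t ∈ slab j := by
            intro t
            have : Function.update x i t 2 = x 2 := Function.update_of_ne h2ne t x
            exact ⟨by rw [this]; exact hx.1, by rw [this]; exact hx.2⟩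
          have heq : ∀ t : ℝ, f (Function.update x i t) = F (Function.update x i t) :=
            fun t => Set.indicator_of_mem (hmem t) F
          calc ENNReal.ofReal (w x ^ 2)
              ≤ ∫⁻ t in Set.Icc (x i) (x i + 1), F (Function.update x i t) :=
                key w hw x i (x i) ⟨le_refl _, by linarith⟩
            _ ≤ ∫⁻ t, F (Function.update x i t) := setLIntegral_le_lintegral _ _
            _ = ∫⁻ t, f (Function.update x i t) := by
                apply lintegral_congr
                intro t
                rw [heq t]
      calc ENNReal.ofReal (|w x| ^ 3)
          = ENNReal.ofReal (w x ^ 2) ^ ((3:ℝ)/2) := by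
            rw [ENNReal.ofReal_rpow_of_nonneg (sq_nonneg _) (by norm_num)]
            congr 1
            rw [← sq_abs, ← Real.rpow_natCast |w x| 2, ← Real.rpow_mul (abs_nonneg _)]
            rw [show ((2:ℕ):ℝ)*(3/2) = ((3:ℕ):ℝ) by norm_num, Real.rpow_natCast]
        _ = ∏ _i : Fin 3, ENNReal.ofReal (w x ^ 2) ^ ((1:ℝ)/2) := by
            rw [Finset.prod_const]
            rw [Finset.card_univ, Fintype.card_fin, ← ENNReal.rpow_natCast
              (ENNReal.ofReal (w x ^ 2) ^ ((1:ℝ)/2)) 3, ← ENNReal.rpow_mul]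
            norm_num
        _ ≤ ∏ i : Fin 3, (∫⁻ t, f (Function.update x i t)) ^ ((1:ℝ)/2) :=
            Finset.prod_le_prod' fun i _ => ENNReal.rpow_le_rpow (hb i) (by norm_num)
    · rw [Set.indicator_of_notMem hx]
      exact zero_le
  calc ∫⁻ x in slab j, ENNReal.ofReal (|w x| ^ 3)
      = ∫⁻ x, (slab j).indicator (fun y => ENNReal.ofReal (|w y| ^ 3)) x := by
        rw [lintegral_indicator (slab_meas j)]
    _ ≤ ∫⁻ x, ∏ i : Fin 3, (∫⁻ t, f (Function.update x i t)) ^ ((1:ℝ)/2) :=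
        lintegral_mono hpt
    _ ≤ (∫⁻ x, f x) ^ ((3:ℝ)/2) := LW
    _ = (∫⁻ x in slab j, F x) ^ ((3:ℝ)/2) := by rw [lintegral_indicator (slab_meas j)]
lemma slab_cover : (⋃ j : ℤ, slab j) = Set.univ := by
  ext x
  simp only [Set.mem_iUnion, Set.mem_univ, iff_true]
  exact ⟨⌊x 2⌋, Int.floor_le _, Int.lt_floor_add_one _⟩

lemma slab_disj : Pairwise (Function.onFun Disjoint slab) := by
  intro j k hjk
  rw [Function.onFun, Set.disjoint_left]
  rintro x ⟨hj1, hj2⟩ ⟨hk1, hk2⟩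
  apply hjk
  have h1 : (j:ℝ) < (k:ℝ) + 1 := lt_of_le_of_lt hj1 hk2
  have h2 : (k:ℝ) < (j:ℝ) + 1 := lt_of_le_of_lt hk1 hj2
  have h1' : j < k + 1 := by exact_mod_cast h1
  have h2' : k < j + 1 := by exact_mod_cast h2
  omega

lemma lintegral_slab_sum (G : V3 → ENNReal) :
    ∑' j : ℤ, ∫⁻ x in slab j, G x = ∫⁻ x, G x := by
  rw [← lintegral_iUnion slab_meas slab_disj, slab_cover, Measure.restrict_univ]

theorem slab_concentration (c₁ B : ℝ) (hc₁ : 0 < c₁) (u : ℕ → V3 → ℝ)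
    (hdiff : ∀ n, Differentiable ℝ (u n))
    (hH1 : ∀ n, Integrable fun x : V3 =>
      (∑ i : Fin 3, (pd i (u n) x) ^ 2) + (u n x) ^ 2)
    (hB : ∀ n, (∫ x : V3, ((∑ i : Fin 3, (pd i (u n) x) ^ 2) + (u n x) ^ 2)) ≤ B)
    (hu3 : ∀ n, Integrable fun x : V3 => |u n x| ^ 3)
    (hc : ∀ n, c₁ ≤ ∫ x : V3, |u n x| ^ 3) :
    ∃ c₄ : ℝ, 0 < c₄ ∧ ∀ n, ∃ j : ℤ,
      c₄ ≤ ∫ x in {x : V3 | (j : ℝ) ≤ x 2 ∧ x 2 < (j : ℝ) + 1}, |u n x| ^ 3 := by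
  have hB0 : 0 ≤ B := le_trans (integral_nonneg fun x => by positivity) (hB 0)
  set r : ℝ := c₁ / (4 * (B + 1)) with hrdef
  have hr : 0 < r := div_pos hc₁ (by linarith)
  refine ⟨r ^ 3 / 2, by positivity, fun n => ?_⟩
  set w := u n with hwdef
  have hw := hdiff n
  set h : V3 → ℝ := fun x => (∑ i, pd i w x ^ 2) + w x ^ 2 with hhdef
  have hh : Integrable h := hH1 n
  have hhnn : ∀ x, 0 ≤ h x := fun x => by positivity
  set A : ℤ → ENNReal := fun j => ∫⁻ x in slab j, ENNReal.ofReal (|w x| ^ 3) with hAdef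
  set C : ℤ → ENNReal := fun j => ∫⁻ x in slab j, ENNReal.ofReal (4 * h x) with hCdef
  have hAC : ∀ j, A j ≤ C j ^ ((3:ℝ)/2) := fun j => slab_sobolev w hw j
  have htotA : ∑' j, A j = ENNReal.ofReal (∫ x, |w x| ^ 3) := by
    rw [ofReal_integral_eq_lintegral_ofReal (hu3 n)
      (Filter.Eventually.of_forall fun x => by positivity)]
    exact lintegral_slab_sum _
  have htotC : ∑' j, C j = ENNReal.ofReal (∫ x, 4 * h x) := by
    rw [ofReal_integral_eq_lintegral_ofReal (hh.const_mul 4)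
      (Filter.Eventually.of_forall fun x => by positivity)]
    exact lintegral_slab_sum _
  have hCle : ∑' j, C j ≤ ENNReal.ofReal (4 * (B + 1)) := by
    rw [htotC]
    apply ENNReal.ofReal_le_ofReal
    rw [integral_const_mul]
    have := hB n
    nlinarith [hB n]
  set S : ENNReal := ⨆ j, A j with hSdef
  have hAS : ∀ j, A j ≤ S ^ ((1:ℝ)/3) * C j := by
    intro j
    have h1 : A j = A j ^ ((1:ℝ)/3) * A j ^ ((2:ℝ)/3) := by
      rw [← ENNReal.rpow_add_of_nonneg _ _ (by norm_num) (by norm_num)]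
      norm_num
    rw [h1]
    apply mul_le_mul'
    · exact ENNReal.rpow_le_rpow (le_iSup A j) (by norm_num)
    · calc A j ^ ((2:ℝ)/3) ≤ (C j ^ ((3:ℝ)/2)) ^ ((2:ℝ)/3) :=
          ENNReal.rpow_le_rpow (hAC j) (by norm_num)
        _ = C j := by
          rw [← ENNReal.rpow_mul]
          norm_num
  have hc1S : ENNReal.ofReal c₁ ≤ S ^ ((1:ℝ)/3) * ENNReal.ofReal (4 * (B + 1)) := by
    calc ENNReal.ofReal c₁ ≤ ENNReal.ofReal (∫ x, |w x| ^ 3) :=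
        ENNReal.ofReal_le_ofReal (hc n)
      _ = ∑' j, A j := htotA.symm
      _ ≤ ∑' j, S ^ ((1:ℝ)/3) * C j := ENNReal.tsum_le_tsum hAS
      _ = S ^ ((1:ℝ)/3) * ∑' j, C j := ENNReal.tsum_mul_left
      _ ≤ S ^ ((1:ℝ)/3) * ENNReal.ofReal (4 * (B + 1)) := mul_le_mul_right hCle _
  have h13 : ENNReal.ofReal r ≤ S ^ ((1:ℝ)/3) := by
    have : ENNReal.ofReal r = ENNReal.ofReal c₁ / ENNReal.ofReal (4 * (B + 1)) := by
      rw [hrdef, ENNReal.ofReal_div_of_pos (by linarith)]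
    rw [this]
    exact ENNReal.div_le_of_le_mul hc1S
  have hS : ENNReal.ofReal (r ^ 3) ≤ S := by
    calc ENNReal.ofReal (r ^ 3) = ENNReal.ofReal r ^ ((3:ℕ):ℝ) := by
          rw [ENNReal.ofReal_rpow_of_pos hr, Real.rpow_natCast]
      _ ≤ (S ^ ((1:ℝ)/3)) ^ ((3:ℕ):ℝ) := ENNReal.rpow_le_rpow h13 (by norm_num)
      _ = S := by
          rw [← ENNReal.rpow_mul]
          norm_num
  by_contra hcon
  push_neg at hcon
  have hub : ∀ j, A j ≤ ENNReal.ofReal (r ^ 3 / 2) := by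
    intro j
    have hint : IntegrableOn (fun x => |w x| ^ 3) (slab j) := (hu3 n).integrableOn
    have : A j = ENNReal.ofReal (∫ x in slab j, |w x| ^ 3) := by
      rw [ofReal_integral_eq_lintegral_ofReal hint
        (Filter.Eventually.of_forall fun x => by positivity)]
    rw [this]
    exact ENNReal.ofReal_le_ofReal (le_of_lt (hcon j))
  have : S ≤ ENNReal.ofReal (r ^ 3 / 2) := iSup_le hub
  have hlt : ENNReal.ofReal (r ^ 3) ≤ ENNReal.ofReal (r ^ 3 / 2) := le_trans hS this
  rw [ENNReal.ofReal_le_ofReal_iff (by positivity)] at hlt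
  nlinarith [pow_pos hr 3]
end
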